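/- Let γ > 0 and m ∈ ℕ, and define ψ_m : ℝ² → ℂ by ψ_m(x₁,x₂) = (γ^((m+1)/2)/√(π·m!))·(x₁ + i x₂)^m·exp(−γ(x₁²+x₂²)/2). Then the angular-momentum pairing satisfies ∫_{ℝ²} \overline{ψ_m(x)}·( x₂ ∂₁ψ_m(x) − x₁ ∂₂ψ_m(x) ) dx = −i·m. Consequently, for any Ω ∈ ℝ, Re( −iΩ ∫_{ℝ²} \overline{ψ_m}·(x₂∂₁ψ_m − x₁∂₂ψ_m) dx ) = −m·Ω. -/

import Mathlib

open MeasureTheory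

private lemma vortex_deriv_aux (γ : ℝ) (m : ℕ) (C : ℝ) (x : EuclideanSpace ℝ (Fin 2)) :
    ((x 1 : ℂ) * fderiv ℝ (fun y : EuclideanSpace ℝ (Fin 2) =>
        (C : ℂ) * (((y 0 : ℂ) + Complex.I * (y 1 : ℂ)) ^ m *
          Complex.exp (((-γ/2 * ((y 0) ^ 2 + (y 1) ^ 2) : ℝ) : ℂ)))) x (EuclideanSpace.single 0 1) -
     (x 0 : ℂ) * fderiv ℝ (fun y : EuclideanSpace ℝ (Fin 2) =>
        (C : ℂ) * (((y 0 : ℂ) + Complex.I * (y 1 : ℂ)) ^ m *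
          Complex.exp (((-γ/2 * ((y 0) ^ 2 + (y 1) ^ 2) : ℝ) : ℂ)))) x (EuclideanSpace.single 1 1))
    = -Complex.I * m * ((C : ℂ) * (((x 0 : ℂ) + Complex.I * (x 1 : ℂ)) ^ m *
          Complex.exp (((-γ/2 * ((x 0) ^ 2 + (x 1) ^ 2) : ℝ) : ℂ)))) := by
  have h0 : HasFDerivAt (fun y : EuclideanSpace ℝ (Fin 2) => y 0)
      (EuclideanSpace.proj (0:Fin 2) : EuclideanSpace ℝ (Fin 2) →L[ℝ] ℝ) x := by
    exact ContinuousLinearMap.hasFDerivAt (EuclideanSpace.proj (0:Fin 2) : EuclideanSpace ℝ (Fin 2) →L[ℝ] ℝ)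
  have h1 : HasFDerivAt (fun y : EuclideanSpace ℝ (Fin 2) => y 1)
      (EuclideanSpace.proj (1:Fin 2) : EuclideanSpace ℝ (Fin 2) →L[ℝ] ℝ) x := by
    exact ContinuousLinearMap.hasFDerivAt (EuclideanSpace.proj (1:Fin 2) : EuclideanSpace ℝ (Fin 2) →L[ℝ] ℝ)
  have h0c : HasFDerivAt (𝕜 := ℝ) (fun y : EuclideanSpace ℝ (Fin 2) => ((y 0 : ℝ) : ℂ))
      (Complex.ofRealCLM.comp (EuclideanSpace.proj (0:Fin 2))) x :=
    Complex.ofRealCLM.hasFDerivAt.comp x h0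
  have h1c : HasFDerivAt (𝕜 := ℝ) (fun y : EuclideanSpace ℝ (Fin 2) => ((y 1 : ℝ) : ℂ))
      (Complex.ofRealCLM.comp (EuclideanSpace.proj (1:Fin 2))) x :=
    Complex.ofRealCLM.hasFDerivAt.comp x h1
  have hz : HasFDerivAt (𝕜 := ℝ) (fun y : EuclideanSpace ℝ (Fin 2) => (y 0 : ℂ) + Complex.I * (y 1 : ℂ))
      (Complex.ofRealCLM.comp (EuclideanSpace.proj (0:Fin 2)) +
        Complex.I • (Complex.ofRealCLM.comp (EuclideanSpace.proj (1:Fin 2)))) x :=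
    h0c.add (h1c.const_mul Complex.I)
  have hzm := (hasDerivAt_pow m ((x 0 : ℂ) + Complex.I * (x 1 : ℂ))).comp_hasFDerivAt x hz
  have h0sq := (hasDerivAt_pow 2 (x 0)).comp_hasFDerivAt x h0
  have h1sq := (hasDerivAt_pow 2 (x 1)).comp_hasFDerivAt x h1
  have hr := (h0sq.add h1sq).const_mul (-γ/2)
  have hrc := Complex.ofRealCLM.hasFDerivAt.comp x hr
  have hfull := ((hzm.mul hrc.cexp).const_mul (C : ℂ))
  have hfull' : HasFDerivAt (fun y : EuclideanSpace ℝ (Fin 2) =>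
        (C : ℂ) * (((y 0 : ℂ) + Complex.I * (y 1 : ℂ)) ^ m *
          Complex.exp (((-γ/2 * ((y 0) ^ 2 + (y 1) ^ 2) : ℝ) : ℂ))))
      ((C : ℂ) • ((((x 0 : ℂ) + Complex.I * (x 1 : ℂ)) ^ m) •
          (Complex.exp (((-γ/2 * ((x 0) ^ 2 + (x 1) ^ 2) : ℝ) : ℂ)) •
            (Complex.ofRealCLM.comp ((-γ/2) • (((2:ℝ) * x 0 ^ (2-1)) • (EuclideanSpace.proj (0:Fin 2)) +
              ((2:ℝ) * x 1 ^ (2-1)) • (EuclideanSpace.proj (1:Fin 2))))))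
        + Complex.exp (((-γ/2 * ((x 0) ^ 2 + (x 1) ^ 2) : ℝ) : ℂ)) •
          (((m : ℂ) * ((x 0 : ℂ) + Complex.I * (x 1 : ℂ)) ^ (m - 1)) •
            (Complex.ofRealCLM.comp (EuclideanSpace.proj (0:Fin 2)) +
              Complex.I • (Complex.ofRealCLM.comp (EuclideanSpace.proj (1:Fin 2))))))) x := by
    exact hfull
  rw [hfull'.fderiv]
  simp only [ContinuousLinearMap.smul_apply, ContinuousLinearMap.add_apply,
    ContinuousLinearMap.comp_apply, ContinuousLinearMap.coe_smul', Pi.smul_apply,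
    PiLp.proj_apply, EuclideanSpace.single_apply, Complex.ofRealCLM_apply,
    smul_eq_mul]
  norm_num
  obtain _ | k := m
  · ring
  · simp only [Nat.succ_sub_one, pow_succ]
    push_cast
    ring_nf
    simp only [Complex.I_sq]
    ring

private lemma vortex_gauss_aux (γ : ℝ) (hγ : 0 < γ) (m : ℕ) :
    ∫ x : EuclideanSpace ℝ (Fin 2), ((x 0)^2 + (x 1)^2)^m * Real.exp (-γ * ((x 0)^2+(x 1)^2))
      = Real.pi * m.factorial / γ^(m+1) := by
  have hT : MeasurePreserving
      (Complex.measurableEquivPi.trans (MeasurableEquiv.toLp 2 (Fin 2 → ℝ))) volume volume :=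
    ((EuclideanSpace.volume_preserving_symm_measurableEquiv_toLp (Fin 2)).symm).comp
      Complex.volume_preserving_equiv_pi
  rw [← hT.integral_comp' (f := Complex.measurableEquivPi.trans (MeasurableEquiv.toLp 2 (Fin 2 → ℝ)))]
  have hco : ∀ (z : ℂ),
      ((Complex.measurableEquivPi.trans (MeasurableEquiv.toLp 2 (Fin 2 → ℝ))) z) 0 = z.re ∧
      ((Complex.measurableEquivPi.trans (MeasurableEquiv.toLp 2 (Fin 2 → ℝ))) z) 1 = z.im :=
    fun z => ⟨rfl, rfl⟩
  have key := Complex.integral_rpow_mul_exp_neg_mul_rpow (p := 2) (q := 2*m) one_le_two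
    (lt_of_lt_of_le (show (-2:ℝ) < 0 by norm_num) (by positivity : (0:ℝ) ≤ 2*(m:ℝ))) hγ
  rw [show (-(2*(m:ℝ)+2)/2) = -(((m+1:ℕ)):ℝ) by push_cast; ring, Real.rpow_neg hγ.le,
    Real.rpow_natCast, show ((2*(m:ℝ)+2)/2) = (m:ℝ)+1 by ring,
    Real.Gamma_nat_eq_factorial] at key
  simp_rw [show (2*(m:ℝ)) = ((2*m : ℕ):ℝ) by push_cast; ring, Real.rpow_natCast, pow_mul,
    show (2:ℝ) = ((2:ℕ):ℝ) by norm_num, Real.rpow_natCast] at key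
  have hpt : ∀ z : ℂ, (z.re^2 + z.im^2 : ℝ) = ‖z‖^2 := fun z => by
    rw [Complex.sq_norm, Complex.normSq_apply]; ring
  simp_rw [fun z : ℂ => (hco z).1, fun z : ℂ => (hco z).2, hpt, key]
  field_simp

/-- the angular-momentum pairing of the 2D vortex function `ψ_m` equals
`-i·m`, and consequently the rotational energy term equals `-m·Ω`. -/
theorem vortex_angular_momentum
    (γ : ℝ) (hγ : 0 < γ) (m : ℕ)
    (ψ : EuclideanSpace ℝ (Fin 2) → ℂ)
    (hψ : ∀ x : EuclideanSpace ℝ (Fin 2),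
      ψ x = ((γ ^ (((m : ℝ) + 1) / 2) / Real.sqrt (Real.pi * m.factorial) : ℝ) : ℂ) *
        ((x 0 : ℂ) + Complex.I * (x 1 : ℂ)) ^ m *
        Complex.exp (((-(γ * ((x 0) ^ 2 + (x 1) ^ 2)) / 2 : ℝ) : ℂ))) :
    (∫ x : EuclideanSpace ℝ (Fin 2),
        (starRingEnd ℂ) (ψ x) *
          ((x 1 : ℂ) * fderiv ℝ ψ x (EuclideanSpace.single 0 1) -
           (x 0 : ℂ) * fderiv ℝ ψ x (EuclideanSpace.single 1 1))) = -Complex.I * m ∧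
    ∀ Ω : ℝ,
      (-(Complex.I * (Ω : ℂ)) * ∫ x : EuclideanSpace ℝ (Fin 2),
          (starRingEnd ℂ) (ψ x) *
            ((x 1 : ℂ) * fderiv ℝ ψ x (EuclideanSpace.single 0 1) -
             (x 0 : ℂ) * fderiv ℝ ψ x (EuclideanSpace.single 1 1))).re = -(m : ℝ) * Ω := by
  set C : ℝ := γ ^ (((m : ℝ) + 1) / 2) / Real.sqrt (Real.pi * m.factorial) with hCdef
  have hψeq : ψ = fun y : EuclideanSpace ℝ (Fin 2) =>
      (C : ℂ) * (((y 0 : ℂ) + Complex.I * (y 1 : ℂ)) ^ m *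
        Complex.exp (((-γ/2 * ((y 0) ^ 2 + (y 1) ^ 2) : ℝ) : ℂ))) := by
    funext y
    rw [hψ y, show -(γ * ((y 0)^2 + (y 1)^2))/2 = -γ/2 * ((y 0)^2 + (y 1)^2) by ring]
    ring
  subst hψeq
  -- pointwise derivative identity
  have hder := vortex_deriv_aux γ m C
  -- normSq computation
  have hnormSq : ∀ x : EuclideanSpace ℝ (Fin 2),
      (Complex.normSq ((C : ℂ) * (((x 0 : ℂ) + Complex.I * (x 1 : ℂ)) ^ m *
        Complex.exp (((-γ/2 * ((x 0) ^ 2 + (x 1) ^ 2) : ℝ) : ℂ)))) : ℝ)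
      = C^2 * (((x 0)^2 + (x 1)^2)^m * Real.exp (-γ * ((x 0)^2+(x 1)^2))) := by
    intro x
    have h1 : Complex.normSq ((x 0 : ℂ) + Complex.I * (x 1 : ℂ)) = (x 0)^2 + (x 1)^2 := by
      simp [Complex.normSq_apply]; ring
    rw [map_mul, map_mul, map_pow, Complex.normSq_ofReal, h1,
      Complex.normSq_eq_norm_sq, Complex.norm_exp_ofReal]
    rw [pow_two (Real.exp (-γ/2 * ((x 0)^2+(x 1)^2))), ← Real.exp_add,
      show (-γ/2 * ((x 0)^2+(x 1)^2) + -γ/2 * ((x 0)^2+(x 1)^2)) = -γ * ((x 0)^2+(x 1)^2) by ring]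
    ring
  -- normalization
  have hint1 : ∫ x : EuclideanSpace ℝ (Fin 2),
      Complex.normSq ((C : ℂ) * (((x 0 : ℂ) + Complex.I * (x 1 : ℂ)) ^ m *
        Complex.exp (((-γ/2 * ((x 0) ^ 2 + (x 1) ^ 2) : ℝ) : ℂ)))) = 1 := by
    simp_rw [hnormSq]
    rw [integral_const_mul, vortex_gauss_aux γ hγ m]
    have hC2 : C^2 = γ^(m+1) / (Real.pi * m.factorial) := by
      rw [hCdef, div_pow, Real.sq_sqrt (by positivity)]
      congr 1
      rw [← Real.rpow_natCast (γ ^ (((m:ℝ)+1)/2)) 2, ← Real.rpow_mul hγ.le,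
        show ((m:ℝ)+1)/2 * ((2:ℕ):ℝ) = ((m+1:ℕ):ℝ) by push_cast; ring, Real.rpow_natCast]
    rw [hC2]
    have h1 : (0:ℝ) < Real.pi * m.factorial := by positivity
    have h2 : (0:ℝ) < γ^(m+1) := by positivity
    field_simp
  -- the main integral identity
  have hmain : (∫ x : EuclideanSpace ℝ (Fin 2),
      (starRingEnd ℂ) ((C : ℂ) * (((x 0 : ℂ) + Complex.I * (x 1 : ℂ)) ^ m *
          Complex.exp (((-γ/2 * ((x 0) ^ 2 + (x 1) ^ 2) : ℝ) : ℂ)))) *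
        ((x 1 : ℂ) * fderiv ℝ (fun y : EuclideanSpace ℝ (Fin 2) =>
            (C : ℂ) * (((y 0 : ℂ) + Complex.I * (y 1 : ℂ)) ^ m *
              Complex.exp (((-γ/2 * ((y 0) ^ 2 + (y 1) ^ 2) : ℝ) : ℂ)))) x (EuclideanSpace.single 0 1) -
         (x 0 : ℂ) * fderiv ℝ (fun y : EuclideanSpace ℝ (Fin 2) =>
            (C : ℂ) * (((y 0 : ℂ) + Complex.I * (y 1 : ℂ)) ^ m *
              Complex.exp (((-γ/2 * ((y 0) ^ 2 + (y 1) ^ 2) : ℝ) : ℂ)))) x (EuclideanSpace.single 1 1)))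
      = -Complex.I * m := by
    simp_rw [hder]
    have h2 : ∀ z : ℂ, (starRingEnd ℂ) z * (-Complex.I * (m:ℂ) * z)
        = (-Complex.I * (m:ℂ)) * ((Complex.normSq z : ℝ) : ℂ) := fun z => by
      rw [show (starRingEnd ℂ) z * (-Complex.I * (m:ℂ) * z)
          = (-Complex.I * (m:ℂ)) * (z * (starRingEnd ℂ) z) by ring, Complex.mul_conj]
    simp_rw [h2]
    rw [integral_const_mul]
    have hint2 : ∫ x : EuclideanSpace ℝ (Fin 2),
        ((Complex.normSq ((C : ℂ) * (((x 0 : ℂ) + Complex.I * (x 1 : ℂ)) ^ m *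
          Complex.exp (((-γ/2 * ((x 0) ^ 2 + (x 1) ^ 2) : ℝ) : ℂ)))) : ℝ) : ℂ) = ((1:ℝ):ℂ) := by
      rw [← hint1]
      exact integral_ofReal
    rw [hint2]
    simp
  refine ⟨hmain, fun Ω => ?_⟩
  rw [hmain, show -(Complex.I * (Ω:ℂ)) * (-Complex.I * (m:ℂ)) = ((-(m:ℝ) * Ω : ℝ) : ℂ) by
    push_cast; ring_nf; simp only [Complex.I_sq]; ring, Complex.ofReal_re]
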